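/- For every m ≥ 2, the graph G obtained from the even cycle C_{2m} by attaching a new pendent vertex v to one vertex u satisfies Mo(G) = 4m − 1. -/

import Mathlib

open SimpleGraph Finset

open scoped Classical in
/-- The number of vertices strictly closer to `u` than to `v`. -/
noncomputable def nCloser {V : Type*} [Fintype V] (G : SimpleGraph V) (u v : V) : ℕ :=
  (Finset.univ.filter (fun w => G.dist w u < G.dist w v)).card

/-- The contribution `|n_u - n_v|` of a pair of vertices. -/
noncomputable def contrib {V : Type*} [Fintype V] (G : SimpleGraph V) (u v : V) : ℕ :=
  ((nCloser G u v : ℤ) - (nCloser G v u : ℤ)).natAbs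

open scoped Classical in
/-- The Mostar index `Mo(G) = Σ_{uv ∈ E(G)} |n_u − n_v|`. -/
noncomputable def mostar {V : Type*} [Fintype V] (G : SimpleGraph V) : ℕ :=
  ∑ e ∈ G.edgeFinset, Sym2.lift
    ⟨fun u v => contrib G u v,
     fun a b => by simp only [contrib]; omega⟩ e

/-- The graph obtained from the cycle `C_n` (on the vertices `0, …, n-1`) by
attaching the pendent vertex `n` to the vertex `0`. -/
def cyclePlusPendant (n : ℕ) : SimpleGraph (Fin (n + 1)) :=
  SimpleGraph.fromRel (fun u v =>
    (u.val < n ∧ v.val < n ∧ (u.val + 1) % n = v.val) ∨ (u.val = n ∧ v.val = 0))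


namespace MostarAux

variable {m : ℕ}


lemma modc {a n : ℕ} (hn : 0 < n) (h : a < 3*n) :
    (a < n ∧ a % n = a) ∨ (n ≤ a ∧ a < 2*n ∧ a % n + n = a) ∨ (2*n ≤ a ∧ a % n + 2*n = a) := by
  rcases Nat.lt_or_ge a n with h1 | h1
  · exact Or.inl ⟨h1, Nat.mod_eq_of_lt h1⟩
  rcases Nat.lt_or_ge a (2*n) with h2 | h2
  · refine Or.inr (Or.inl ⟨h1, h2, ?_⟩)
    rw [Nat.mod_eq_sub_mod h1, Nat.mod_eq_of_lt (by omega)]; omega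
  · refine Or.inr (Or.inr ⟨h2, ?_⟩)
    rw [Nat.mod_eq_sub_mod h1, Nat.mod_eq_sub_mod (by omega), Nat.mod_eq_of_lt (by omega)]; omega

variable {m : ℕ}

lemma adj_iff (hm : 2 ≤ m) (u v : Fin (2*m+1)) :
    (cyclePlusPendant (2*m)).Adj u v ↔
      (u.val < 2*m ∧ v.val < 2*m ∧
        ((u.val + 1) % (2*m) = v.val ∨ (v.val + 1) % (2*m) = u.val))
      ∨ (u.val = 2*m ∧ v.val = 0) ∨ (v.val = 2*m ∧ u.val = 0) := by
  rw [cyclePlusPendant, SimpleGraph.fromRel_adj]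
  constructor
  · rintro ⟨hne, (⟨h1,h2,h3⟩|⟨h1,h2⟩) | (⟨h1,h2,h3⟩|⟨h1,h2⟩)⟩
    · exact Or.inl ⟨h1, h2, Or.inl h3⟩
    · exact Or.inr (Or.inl ⟨h1, h2⟩)
    · exact Or.inl ⟨h2, h1, Or.inr h3⟩
    · exact Or.inr (Or.inr ⟨h1, h2⟩)
  · have hne : ∀ a b : Fin (2*m+1), a.val ≠ b.val → a ≠ b := by
      intro a b h hab; exact h (by rw [hab])
    rintro (⟨h1, h2, (h3 | h3)⟩ | ⟨h1, h2⟩ | ⟨h1, h2⟩)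
    · refine ⟨hne _ _ ?_, Or.inl (Or.inl ⟨h1, h2, h3⟩)⟩
      rcases modc (a := u.val + 1) (n := 2*m) (by omega) (by omega) with h|h|h <;> omega
    · refine ⟨hne _ _ ?_, Or.inr (Or.inl ⟨h2, h1, h3⟩)⟩
      rcases modc (a := v.val + 1) (n := 2*m) (by omega) (by omega) with h|h|h <;> omega
    · exact ⟨hne _ _ (by omega), Or.inl (Or.inr ⟨h1, h2⟩)⟩
    · exact ⟨hne _ _ (by omega), Or.inr (Or.inr ⟨h1, h2⟩)⟩

lemma exists_walk (hm : 2 ≤ m) : ∀ (d : ℕ) (u v : Fin (2*m+1)), u.val < 2*m → v.val < 2*m →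
    (u.val + d) % (2*m) = v.val → ∃ W : (cyclePlusPendant (2*m)).Walk u v, W.length = d := by
  intro d
  induction d with
  | zero =>
    intro u v hu hv h
    have hv2 : v.val = u.val := by rw [← h, Nat.add_zero, Nat.mod_eq_of_lt (by omega)]
    have : u = v := Fin.ext hv2.symm
    subst this; exact ⟨SimpleGraph.Walk.nil, rfl⟩
  | succ d ih =>
    intro u v hu hv h
    set u' : Fin (2*m+1) := ⟨(u.val + 1) % (2*m), by have := Nat.mod_lt (u.val+1) (y := 2*m) (by omega); omega⟩ with hu'
    have hadj : (cyclePlusPendant (2*m)).Adj u u' := by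
      rw [adj_iff hm]
      exact Or.inl ⟨hu, by have := Nat.mod_lt (u.val+1) (y := 2*m) (by omega); exact this, Or.inl rfl⟩
    have hstep : (u'.val + d) % (2*m) = v.val := by
      rw [hu']
      rw [Nat.mod_add_mod]
      rw [show u.val + 1 + d = u.val + (d+1) by omega]
      exact h
    obtain ⟨W, hW⟩ := ih u' v (by have := Nat.mod_lt (u.val+1) (y := 2*m) (by omega); exact this) hv hstep
    exact ⟨SimpleGraph.Walk.cons hadj W, by simp [hW]⟩

/-- potential -/
def F (m : ℕ) (x : Fin (2*m+1)) : ZMod (2*m) :=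
  if x.val = 2*m then 1 else (x.val : ZMod (2*m))

lemma F_step (hm : 2 ≤ m) {u v : Fin (2*m+1)} (h : (cyclePlusPendant (2*m)).Adj u v) :
    F m v = F m u + 1 ∨ F m v = F m u - 1 := by
  rw [adj_iff hm] at h
  rcases h with ⟨h1, h2, (h3 | h3)⟩ | ⟨h1, h2⟩ | ⟨h1, h2⟩
  · left
    rw [F, F, if_neg (by omega), if_neg (by omega), ← h3, ZMod.natCast_mod]
    push_cast; ring
  · right
    rw [F, F, if_neg (by omega), if_neg (by omega), ← h3, eq_sub_iff_add_eq, ZMod.natCast_mod]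
    push_cast; ring
  · right
    rw [F, F, if_pos h1, if_neg (by omega), h2]
    simp
  · left
    rw [F, F, if_pos h1, if_neg (by omega), h2]
    simp

lemma walk_k (hm : 2 ≤ m) {u v : Fin (2*m+1)} (W : (cyclePlusPendant (2*m)).Walk u v) :
    ∃ k : ℤ, ((k : ZMod (2*m)) = F m v - F m u) ∧ k.natAbs ≤ W.length := by
  induction W with
  | nil => exact ⟨0, by simp, by simp⟩
  | @cons a b c h W ih =>
    obtain ⟨k, hk1, hk2⟩ := ih
    rcases F_step hm h with hs | hs
    · refine ⟨k + 1, ?_, by simp [SimpleGraph.Walk.length_cons]; omega⟩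
      push_cast; rw [hk1, hs]; ring
    · refine ⟨k - 1, ?_, by simp [SimpleGraph.Walk.length_cons]; omega⟩
      push_cast; rw [hk1, hs]; ring

lemma dist_cycle (hm : 2 ≤ m) (u v : Fin (2*m+1)) (hu : u.val < 2*m) (hv : v.val < 2*m) :
    (cyclePlusPendant (2*m)).dist u v
      = min ((u.val + 2*m - v.val) % (2*m)) ((v.val + 2*m - u.val) % (2*m)) := by
  set d2 := (u.val + 2*m - v.val) % (2*m) with hd2
  set d1 := (v.val + 2*m - u.val) % (2*m) with hd1
  -- upper bounds
  have key : ∀ a b : Fin (2*m+1), a.val < 2*m → b.val < 2*m →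
      (cyclePlusPendant (2*m)).dist a b ≤ (b.val + 2*m - a.val) % (2*m) := by
    intro a b ha hb
    obtain ⟨W, hW⟩ := exists_walk hm ((b.val + 2*m - a.val) % (2*m)) a b ha hb (by
      rw [Nat.add_mod_mod,
        show a.val + (b.val + 2*m - a.val) = b.val + 2*m by omega, Nat.add_mod_right,
        Nat.mod_eq_of_lt hb])
    exact hW ▸ SimpleGraph.dist_le W
  have up1 : (cyclePlusPendant (2*m)).dist u v ≤ d1 := key u v hu hv
  have up2 : (cyclePlusPendant (2*m)).dist u v ≤ d2 := by
    rw [SimpleGraph.dist_comm]; exact key v u hv hu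
  -- reachability
  have hreach : (cyclePlusPendant (2*m)).Reachable u v := by
    obtain ⟨W, _⟩ := exists_walk hm ((v.val + 2*m - u.val) % (2*m)) u v hu hv (by
      rw [Nat.add_mod u.val _ (2*m), Nat.mod_mod_of_dvd _ (dvd_refl _), ← Nat.add_mod,
        show u.val + (v.val + 2*m - u.val) = v.val + 2*m by omega, Nat.add_mod_right,
        Nat.mod_eq_of_lt hv])
    exact ⟨W⟩
  obtain ⟨W, hW⟩ := hreach.exists_walk_length_eq_dist
  obtain ⟨k, hk1, hk2⟩ := walk_k hm W
  rw [hW] at hk2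
  -- k ≡ d1 mod 2m
  have hd1c : ((d1 : ℕ) : ZMod (2*m)) = F m v - F m u := by
    rw [hd1, ZMod.natCast_mod, F, F, if_neg (by omega), if_neg (by omega),
      Nat.cast_sub (show u.val ≤ v.val + 2*m by omega)]
    have h0 : (2*(m:ZMod (2*m))) = 0 := by
      have := ZMod.natCast_self (2*m); push_cast at this; exact this
    push_cast
    linear_combination h0
  have hcast : (((k - (d1:ℤ)) : ℤ) : ZMod (2*m)) = 0 := by
    push_cast
    rw [hk1, hd1c]
    ring
  rw [ZMod.intCast_zmod_eq_zero_iff_dvd] at hcast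
  obtain ⟨q, hq⟩ := hcast
  have hz : (0:ℤ) ≤ k - d1 ∨ (k:ℤ) - d1 ≤ -(2*m) := by
    rcases le_or_gt 0 q with h | h
    · left; rw [hq]; exact mul_nonneg (by positivity) h
    · right
      rw [hq]
      have h2 := mul_le_mul_of_nonneg_left (show q ≤ -1 by omega)
        (show (0:ℤ) ≤ ((2*m:ℕ):ℤ) by positivity)
      push_cast at h2 ⊢
      linarith
  have hd1lt : d1 < 2*m := Nat.mod_lt _ (by omega)
  have hd2lt : d2 < 2*m := Nat.mod_lt _ (by omega)
  have hsum : d1 + d2 = 2*m ∨ (d1 = 0 ∧ d2 = 0) := by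
    rcases modc (a := v.val + 2*m - u.val) (n := 2*m) (by omega) (by omega) with h1|h1|h1 <;>
    rcases modc (a := u.val + 2*m - v.val) (n := 2*m) (by omega) (by omega) with h2|h2|h2 <;>
      omega
  have hlow : min d2 d1 ≤ k.natAbs := by
    rcases hz with h | h <;> omega
  omega

/-- the pendant vertex -/
def pnd (m : ℕ) : Fin (2*m+1) := ⟨2*m, by omega⟩

/-- the cycle vertex `0` -/
def zer (m : ℕ) : Fin (2*m+1) := ⟨0, by omega⟩

lemma adj_pnd (hm : 2 ≤ m) (v : Fin (2*m+1)) :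
    (cyclePlusPendant (2*m)).Adj (pnd m) v ↔ v = zer m := by
  rw [adj_iff hm]
  constructor
  · rintro (⟨h1, _⟩ | ⟨_, h2⟩ | ⟨_, h2⟩)
    · exact absurd h1 (by simp [pnd])
    · exact Fin.ext h2
    · exact absurd h2 (by simp [pnd]; omega)
  · rintro rfl
    exact Or.inr (Or.inl ⟨rfl, rfl⟩)

lemma reach_zer (hm : 2 ≤ m) (v : Fin (2*m+1)) (hv : v.val < 2*m) :
    (cyclePlusPendant (2*m)).Reachable (zer m) v := by
  obtain ⟨W, _⟩ := exists_walk hm v.val (zer m) v (by simp [zer]; omega) hv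
    (by simp [zer]; exact Nat.mod_eq_of_lt hv)
  exact ⟨W⟩

lemma dist_pnd (hm : 2 ≤ m) (v : Fin (2*m+1)) (hv : v.val < 2*m) :
    (cyclePlusPendant (2*m)).dist (pnd m) v = 1 + (cyclePlusPendant (2*m)).dist (zer m) v := by
  have hadj : (cyclePlusPendant (2*m)).Adj (pnd m) (zer m) := (adj_pnd hm _).mpr rfl
  have hne : pnd m ≠ v := by
    intro h; rw [pnd] at h; have := congrArg Fin.val h; simp at this; omega
  -- upper
  obtain ⟨W0, hW0⟩ := (reach_zer hm v hv).exists_walk_length_eq_dist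
  have hup : (cyclePlusPendant (2*m)).dist (pnd m) v ≤ 1 + (cyclePlusPendant (2*m)).dist (zer m) v := by
    have := SimpleGraph.dist_le (SimpleGraph.Walk.cons hadj W0)
    simpa [hW0, Nat.add_comm] using this
  -- lower
  have hreach : (cyclePlusPendant (2*m)).Reachable (pnd m) v :=
    (SimpleGraph.Adj.reachable hadj).trans (reach_zer hm v hv)
  obtain ⟨W, hW⟩ := hreach.exists_walk_length_eq_dist
  cases W with
  | nil => exact absurd rfl hne
  | @cons _ w _ h W' =>
    have hw : w = zer m := (adj_pnd hm w).mp h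
    subst hw
    have hlow := SimpleGraph.dist_le W'
    rw [SimpleGraph.Walk.length_cons] at hW
    omega

lemma cdmod (hm : 2 ≤ m) (a b : ℕ) (ha : a < 2*m) (hb : b < 2*m) :
    min ((a + 2*m - b) % (2*m)) ((b + 2*m - a) % (2*m))
      = min (max a b - min a b) (2*m - (max a b - min a b)) := by
  rcases modc (a := a + 2*m - b) (n := 2*m) (by omega) (by omega) with h1|h1|h1 <;>
  rcases modc (a := b + 2*m - a) (n := 2*m) (by omega) (by omega) with h2|h2|h2 <;> omega

/-- distance between cycle vertices, mod-free form -/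
lemma dist_cycle' (hm : 2 ≤ m) (u v : Fin (2*m+1)) (hu : u.val < 2*m) (hv : v.val < 2*m) :
    (cyclePlusPendant (2*m)).dist u v
      = min (max u.val v.val - min u.val v.val) (2*m - (max u.val v.val - min u.val v.val)) := by
  rw [dist_cycle hm u v hu hv]
  -- dist u v = min ((u+2m-v)%) ((v+2m-u)%) ; cdmod with a := u.val, b := v.val
  exact cdmod hm u.val v.val hu hv

lemma netie_arith (hm : 2 ≤ m) (i w : ℕ) (hi : i < 2*m) (hw : w < 2*m) :
    min (max w i - min w i) (2*m - (max w i - min w i)) ≠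
    min (max w ((i+1) % (2*m)) - min w ((i+1) % (2*m)))
      (2*m - (max w ((i+1) % (2*m)) - min w ((i+1) % (2*m)))) := by
  rcases modc (a := i+1) (n := 2*m) (by omega) (by omega) with h|h|h <;> omega

set_option maxHeartbeats 1600000 in
lemma reflect_arith (hm : 2 ≤ m) (i w : ℕ) (hi : i < 2*m) (hw : w < 2*m) :
    (min (max ((2*i+1+2*m-w) % (2*m)) i - min ((2*i+1+2*m-w) % (2*m)) i)
        (2*m - (max ((2*i+1+2*m-w) % (2*m)) i - min ((2*i+1+2*m-w) % (2*m)) i))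
      = min (max w ((i+1) % (2*m)) - min w ((i+1) % (2*m)))
        (2*m - (max w ((i+1) % (2*m)) - min w ((i+1) % (2*m)))))
  ∧ (min (max ((2*i+1+2*m-w) % (2*m)) ((i+1) % (2*m)) - min ((2*i+1+2*m-w) % (2*m)) ((i+1) % (2*m)))
        (2*m - (max ((2*i+1+2*m-w) % (2*m)) ((i+1) % (2*m)) - min ((2*i+1+2*m-w) % (2*m)) ((i+1) % (2*m))))
      = min (max w i - min w i) (2*m - (max w i - min w i))) := by
  rcases modc (a := i+1) (n := 2*m) (by omega) (by omega) with h1|h1|h1 <;>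
  rcases modc (a := 2*i+1+2*m-w) (n := 2*m) (by omega) (by omega) with h2|h2|h2 <;>
    exact ⟨by omega, by omega⟩

lemma reflect_invol (hm : 2 ≤ m) (i w : ℕ) (hi : i < 2*m) (hw : w < 2*m) :
    (2*i+1+2*m - ((2*i+1+2*m-w) % (2*m))) % (2*m) = w := by
  rcases modc (a := 2*i+1+2*m-w) (n := 2*m) (by omega) (by omega) with h1|h1|h1 <;>
  rcases modc (a := 2*i+1+2*m - ((2*i+1+2*m-w) % (2*m))) (n := 2*m) (by omega) (by omega)
    with h2|h2|h2 <;> omega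

open scoped Classical

lemma no_tie (hm : 2 ≤ m) (i : ℕ) (hi : i < 2*m) (w : Fin (2*m+1)) :
    (cyclePlusPendant (2*m)).dist w ⟨i, by omega⟩
      ≠ (cyclePlusPendant (2*m)).dist w ⟨(i+1) % (2*m), by have := Nat.mod_lt (i+1) (y := 2*m) (by omega); omega⟩ := by
  have hj : (i+1) % (2*m) < 2*m := Nat.mod_lt _ (by omega)
  by_cases hw : w.val < 2*m
  · rw [dist_cycle' hm w _ hw hi, dist_cycle' hm w _ hw hj]
    exact netie_arith hm i w.val hi hw
  · have hwp : w = pnd m := Fin.ext (by simp only [pnd]; omega)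
    subst hwp
    rw [dist_pnd hm _ hi, dist_pnd hm _ hj,
      dist_cycle' hm (zer m) _ (by simp [zer]; omega) hi,
      dist_cycle' hm (zer m) _ (by simp [zer]; omega) hj]
    have := netie_arith hm i 0 hi (by omega)
    simp only [zer]
    omega

def sig (hm : 2 ≤ m) (i : ℕ) (w : Fin (2*m+1)) : Fin (2*m+1) :=
  ⟨(2*i+1+2*m - w.val) % (2*m), by
    have := Nat.mod_lt (2*i+1+2*m - w.val) (y := 2*m) (by omega); omega⟩

lemma contrib_cycle (hm : 2 ≤ m) (i : ℕ) (hi : i < 2*m) :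
    contrib (cyclePlusPendant (2*m)) ⟨i, by omega⟩ ⟨(i+1) % (2*m), by have := Nat.mod_lt (i+1) (y := 2*m) (by omega); omega⟩ = 1 := by
  have hj : (i+1) % (2*m) < 2*m := Nat.mod_lt _ (by omega)
  set G := cyclePlusPendant (2*m) with hG
  set u : Fin (2*m+1) := ⟨i, by omega⟩ with hu
  set v : Fin (2*m+1) := ⟨(i+1) % (2*m), by have := Nat.mod_lt (i+1) (y := 2*m) (by omega); omega⟩ with hv
  have hnt : ∀ w, G.dist w u ≠ G.dist w v := no_tie hm i hi
  set A := Finset.univ.filter (fun w => G.dist w u < G.dist w v) with hA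
  set B := Finset.univ.filter (fun w => G.dist w v < G.dist w u) with hB
  -- total count
  have htot : A.card + B.card = 2*m+1 := by
    have h1 := Finset.card_filter_add_card_filter_not
      (s := Finset.univ (α := Fin (2*m+1))) (p := fun w => G.dist w u < G.dist w v)
    have h2 : Finset.univ.filter (fun w => ¬ (G.dist w u < G.dist w v)) = B := by
      apply Finset.filter_congr
      intro w _
      have := hnt w
      simp only [not_lt, eq_iff_iff]
      omega
    rw [h2] at h1
    simpa [Finset.card_univ] using h1
  -- reflection bijection on cycle parts
  have hcyc : (A.filter (fun w => w.val < 2*m)).card = (B.filter (fun w => w.val < 2*m)).card := by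
    refine Finset.card_nbij' (sig hm i) (sig hm i) ?_ ?_ ?_ ?_
    · intro w hwmem
      simp only [Finset.mem_coe, Finset.mem_filter, Finset.mem_univ, true_and, hA, hB] at hwmem ⊢
      obtain ⟨hlt, hw⟩ := hwmem
      have hmod : (sig hm i w).val < 2*m := Nat.mod_lt _ (by omega)
      refine ⟨?_, hmod⟩
      rw [dist_cycle' hm w u hw hi, dist_cycle' hm w v hw hj] at hlt
      rw [dist_cycle' hm (sig hm i w) u hmod hi, dist_cycle' hm (sig hm i w) v hmod hj]
      obtain ⟨e1, e2⟩ := reflect_arith hm i w.val hi hw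
      simp only [hu, hv, sig, Fin.val_mk] at hlt ⊢
      omega
    · intro w hwmem
      simp only [Finset.mem_coe, Finset.mem_filter, Finset.mem_univ, true_and, hA, hB] at hwmem ⊢
      obtain ⟨hlt, hw⟩ := hwmem
      have hmod : (sig hm i w).val < 2*m := Nat.mod_lt _ (by omega)
      refine ⟨?_, hmod⟩
      rw [dist_cycle' hm w v hw hj, dist_cycle' hm w u hw hi] at hlt
      rw [dist_cycle' hm (sig hm i w) v hmod hj, dist_cycle' hm (sig hm i w) u hmod hi]
      obtain ⟨e1, e2⟩ := reflect_arith hm i w.val hi hw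
      simp only [hu, hv, sig, Fin.val_mk] at hlt ⊢
      omega
    · intro w hwmem
      simp only [Finset.mem_coe, Finset.mem_filter] at hwmem
      exact Fin.ext (by simpa [sig] using reflect_invol hm i w.val hi hwmem.2)
    · intro w hwmem
      simp only [Finset.mem_coe, Finset.mem_filter] at hwmem
      exact Fin.ext (by simpa [sig] using reflect_invol hm i w.val hi hwmem.2)
  -- pendant parts
  have hsubA : ∀ w ∈ A.filter (fun w => ¬ w.val < 2*m), w = pnd m := by
    intro w hwmem
    simp only [Finset.mem_filter] at hwmem
    exact Fin.ext (by simp only [pnd]; omega)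
  have hsubB : ∀ w ∈ B.filter (fun w => ¬ w.val < 2*m), w = pnd m := by
    intro w hwmem
    simp only [Finset.mem_filter] at hwmem
    exact Fin.ext (by simp only [pnd]; omega)
  have hpnd : (A.filter (fun w => ¬ w.val < 2*m)).card + (B.filter (fun w => ¬ w.val < 2*m)).card = 1 := by
    have hABdisj : ∀ w, ¬ (w ∈ A ∧ w ∈ B) := by
      intro w ⟨ha, hb⟩
      simp only [hA, hB, Finset.mem_filter] at ha hb
      omega
    have hmem : pnd m ∈ A ∨ pnd m ∈ B := by
      have := hnt (pnd m)
      rcases Nat.lt_or_ge (G.dist (pnd m) u) (G.dist (pnd m) v) with h | h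
      · exact Or.inl (by simp [hA, h])
      · exact Or.inr (by simp [hB]; omega)
    have hnp : ¬ ((pnd m).val < 2*m) := by simp [pnd]
    rcases hmem with h | h
    · have e1 : A.filter (fun w => ¬ w.val < 2*m) = {pnd m} :=
        Finset.eq_singleton_iff_unique_mem.mpr
          ⟨Finset.mem_filter.mpr ⟨h, hnp⟩, hsubA⟩
      have e2 : B.filter (fun w => ¬ w.val < 2*m) = ∅ := by
        rw [Finset.eq_empty_iff_forall_notMem]
        intro w hw
        have := hsubB w hw
        subst this
        exact hABdisj _ ⟨h, (Finset.mem_filter.mp hw).1⟩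
      rw [e1, e2]; simp
    · have e1 : B.filter (fun w => ¬ w.val < 2*m) = {pnd m} :=
        Finset.eq_singleton_iff_unique_mem.mpr
          ⟨Finset.mem_filter.mpr ⟨h, hnp⟩, hsubB⟩
      have e2 : A.filter (fun w => ¬ w.val < 2*m) = ∅ := by
        rw [Finset.eq_empty_iff_forall_notMem]
        intro w hw
        have := hsubA w hw
        subst this
        exact hABdisj _ ⟨(Finset.mem_filter.mp hw).1, h⟩
      rw [e1, e2]; simp
  have hAs := Finset.card_filter_add_card_filter_not (s := A) (p := fun w => w.val < 2*m)
  have hBs := Finset.card_filter_add_card_filter_not (s := B) (p := fun w => w.val < 2*m)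
  have hcard : contrib G u v = (((A.card : ℤ)) - B.card).natAbs := by
    rw [contrib]
    congr 1
  rw [hcard]
  omega

lemma contrib_pendant (hm : 2 ≤ m) :
    contrib (cyclePlusPendant (2*m)) (pnd m) (zer m) = 2*m - 1 := by
  set G := cyclePlusPendant (2*m) with hG
  have hz : (zer m).val < 2*m := by simp [zer]; omega
  have hd0 : G.dist (pnd m) (zer m) = 1 := by
    rw [dist_pnd hm _ hz, SimpleGraph.dist_self]
  have hgen : ∀ w : Fin (2*m+1), w ≠ pnd m → G.dist w (pnd m) = 1 + G.dist w (zer m) := by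
    intro w hw
    have hwv : w.val < 2*m := by
      have := w.isLt
      have : w.val ≠ 2*m := fun h => hw (Fin.ext (by simp [pnd, h]))
      omega
    rw [SimpleGraph.dist_comm, dist_pnd hm w hwv, SimpleGraph.dist_comm]
  have h1 : Finset.univ.filter (fun w => G.dist w (pnd m) < G.dist w (zer m)) = {pnd m} := by
    apply Finset.eq_singleton_iff_unique_mem.mpr
    constructor
    · simp only [Finset.mem_filter, Finset.mem_univ, true_and, SimpleGraph.dist_self]
      rw [SimpleGraph.dist_comm] at hd0 ⊢
      omega
    · intro w hwm
      simp only [Finset.mem_filter, Finset.mem_univ, true_and] at hwm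
      by_contra hne
      rw [hgen w hne] at hwm
      omega
  have h2 : Finset.univ.filter (fun w => G.dist w (zer m) < G.dist w (pnd m)) = Finset.univ.erase (pnd m) := by
    ext w
    simp only [Finset.mem_filter, Finset.mem_univ, true_and, Finset.mem_erase, and_true]
    constructor
    · intro hlt
      intro heq
      subst heq
      rw [SimpleGraph.dist_self] at hlt
      rw [SimpleGraph.dist_comm] at hd0
      omega
    · intro hne
      rw [hgen w hne]
      omega
  rw [contrib, nCloser, nCloser]
  rw [h1, h2]
  rw [Finset.card_singleton, Finset.card_erase_of_mem (Finset.mem_univ _), Finset.card_univ]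
  simp only [Fintype.card_fin]
  omega

/-- the `i`-th cycle edge -/
def eF (i : Fin (2*m)) : Sym2 (Fin (2*m+1)) :=
  s(⟨i.val, by have := i.isLt; omega⟩,
    ⟨(i.val+1) % (2*m), by
      have h1 := i.isLt
      have := Nat.mod_lt (i.val+1) (y := 2*m) (by omega); omega⟩)

lemma edge_decomp (hm : 2 ≤ m) :
    (cyclePlusPendant (2*m)).edgeFinset
      = (Finset.univ : Finset (Fin (2*m))).image eF ∪ {s(pnd m, zer m)} := by
  ext e
  refine Sym2.inductionOn e (fun a b => ?_)
  rw [SimpleGraph.mem_edgeFinset, SimpleGraph.mem_edgeSet, adj_iff hm]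
  simp only [Finset.mem_union, Finset.mem_image, Finset.mem_singleton, Finset.mem_univ, true_and]
  constructor
  · rintro (⟨h1, h2, (h3 | h3)⟩ | ⟨h1, h2⟩ | ⟨h1, h2⟩)
    · refine Or.inl ⟨⟨a.val, h1⟩, ?_⟩
      rw [eF, Sym2.eq_iff]
      exact Or.inl ⟨Fin.ext rfl, Fin.ext h3⟩
    · refine Or.inl ⟨⟨b.val, h2⟩, ?_⟩
      rw [eF, Sym2.eq_iff]
      exact Or.inr ⟨Fin.ext rfl, Fin.ext h3⟩
    · exact Or.inr (by rw [Sym2.eq_iff]; exact Or.inl ⟨Fin.ext h1, Fin.ext h2⟩)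
    · exact Or.inr (by rw [Sym2.eq_iff]; exact Or.inr ⟨Fin.ext h2, Fin.ext h1⟩)
  · rintro (⟨i, hi⟩ | h)
    · rw [eF, Sym2.eq_iff] at hi
      have hjlt : (i.val+1) % (2*m) < 2*m := Nat.mod_lt _ (by omega)
      rcases hi with ⟨ha, hb⟩ | ⟨ha, hb⟩
      · subst ha; subst hb
        exact Or.inl ⟨i.isLt, hjlt, Or.inl rfl⟩
      · subst ha; subst hb
        exact Or.inl ⟨hjlt, i.isLt, Or.inr rfl⟩
    · rw [Sym2.eq_iff] at h
      rcases h with ⟨ha, hb⟩ | ⟨ha, hb⟩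
      · subst ha; subst hb
        exact Or.inr (Or.inl ⟨rfl, rfl⟩)
      · subst ha; subst hb
        exact Or.inr (Or.inr ⟨rfl, rfl⟩)

lemma edge_disj (hm : 2 ≤ m) :
    s(pnd m, zer m) ∉ (Finset.univ : Finset (Fin (2*m))).image eF := by
  simp only [Finset.mem_image, Finset.mem_univ, true_and]
  rintro ⟨i, hi⟩
  rw [eF, Sym2.eq_iff] at hi
  have hjlt : (i.val+1) % (2*m) < 2*m := Nat.mod_lt _ (by omega)
  rcases hi with ⟨ha, _⟩ | ⟨_, hb⟩
  · have := congrArg Fin.val ha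
    simp [pnd] at this
    omega
  · have := congrArg Fin.val hb
    simp [pnd] at this
    omega

lemma eF_inj (hm : 2 ≤ m) : ∀ i j : Fin (2*m), eF i = eF j → i = j := by
  intro i j hij
  rw [eF, eF, Sym2.eq_iff] at hij
  have hilt := i.isLt
  have hjlt := j.isLt
  rcases hij with ⟨ha, _⟩ | ⟨ha, hb⟩
  · exact Fin.ext (by simpa using congrArg Fin.val ha)
  · have h1 := congrArg Fin.val ha
    have h2 := congrArg Fin.val hb
    simp only [Fin.val_mk] at h1 h2
    exfalso
    rcases modc (a := i.val+1) (n := 2*m) (by omega) (by omega) with hc|hc|hc <;>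
    rcases modc (a := j.val+1) (n := 2*m) (by omega) (by omega) with hd|hd|hd <;> omega

theorem mostar_final (hm : 2 ≤ m) :
    mostar (cyclePlusPendant (2*m)) = 4*m - 1 := by
  rw [mostar, edge_decomp hm,
    Finset.sum_union (Finset.disjoint_singleton_right.mpr (edge_disj hm)),
    Finset.sum_image (fun i _ j _ h => eF_inj hm i j h),
    Finset.sum_singleton]
  have hterm : ∀ i : Fin (2*m), Sym2.lift
      ⟨fun u v => contrib (cyclePlusPendant (2*m)) u v,
       fun a b => by simp only [contrib]; omega⟩ (eF i) = 1 := by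
    intro i
    rw [eF, Sym2.lift_mk]
    exact contrib_cycle hm i.val i.isLt
  rw [Finset.sum_congr rfl (fun i _ => hterm i), Finset.sum_const, Finset.card_univ,
    Fintype.card_fin, smul_eq_mul, mul_one, Sym2.lift_mk]
  show 2*m + contrib (cyclePlusPendant (2*m)) (pnd m) (zer m) = 4*m - 1
  rw [contrib_pendant hm]
  omega

end MostarAux

theorem mostar_cyclePlusPendant (m : ℕ) (hm : 2 ≤ m) :
    mostar (cyclePlusPendant (2 * m)) = 4 * m - 1 :=
  MostarAux.mostar_final hm
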